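/- Let {V_k}_{k≥0} be a sequence of non-negative real numbers, let p ≥ 0 and q ≥ 0 be constants with p + q < 1, and let d : ℕ → ℕ satisfy d(k) ≤ d_max for all k, where d_max is a non-negative integer. If V_{k+1} ≤ p·V_k + q·max{ V_ℓ : max(k − d(k), 0) ≤ ℓ ≤ k } for all k ≥ 0, then V_k ≤ r^k · V_0 for all k ≥ 1, where r = (p + q)^{1/(1 + d_max)}. -/

import Mathlib

/-- Lemma 3.1: a non-negative sequence satisfying a perturbed linear recursion with
bounded-delay shock terms converges linearly with rate `(p+q)^(1/(1+d_max))`. -/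
theorem perturbed_linear_convergence
    (V : ℕ → ℝ) (hV : ∀ k, 0 ≤ V k)
    (p q : ℝ) (hp : 0 ≤ p) (hq : 0 ≤ q) (hpq : p + q < 1)
    (d : ℕ → ℕ) (dmax : ℕ) (hd : ∀ k, d k ≤ dmax)
    (hrec : ∀ k, V (k + 1) ≤
      p * V k + q * (Finset.Icc (k - d k) k).sup' (Finset.nonempty_Icc.mpr (Nat.sub_le _ _)) V) :
    ∀ k, 1 ≤ k → V k ≤ ((p + q) ^ ((1 : ℝ) / (1 + (dmax : ℝ)))) ^ k * V 0 := by
  set r : ℝ := (p + q) ^ ((1 : ℝ) / (1 + (dmax : ℝ))) with hr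
  have hpq0 : 0 ≤ p + q := by linarith
  have hr0 : 0 ≤ r := Real.rpow_nonneg hpq0 _
  have hr1 : r ≤ 1 := Real.rpow_le_one hpq0 hpq.le (by positivity)
  have hrpow : r ^ (1 + dmax) = p + q := by
    rw [hr, ← Real.rpow_natCast (((p + q) ^ ((1 : ℝ) / (1 + (dmax : ℝ))))) (1 + dmax),
      ← Real.rpow_mul hpq0]
    rw [show (1 : ℝ) / (1 + (dmax : ℝ)) * ((1 + dmax : ℕ) : ℝ) = 1 by
      push_cast
      have : (1 : ℝ) + (dmax : ℝ) ≠ 0 := by positivity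
      field_simp]
    exact Real.rpow_one _
  have key : ∀ k, V k ≤ r ^ k * V 0 := by
    intro k
    induction k using Nat.strong_induction_on with
    | _ k ih =>
      match k with
      | 0 => simp
      | (n + 1) =>
        have hsup : (Finset.Icc (n - d n) n).sup'
            (Finset.nonempty_Icc.mpr (Nat.sub_le _ _)) V ≤ r ^ (n - dmax) * V 0 := by
          apply Finset.sup'_le
          intro ℓ hℓ
          simp only [Finset.mem_Icc] at hℓ
          calc V ℓ ≤ r ^ ℓ * V 0 := ih ℓ (by omega)
            _ ≤ r ^ (n - dmax) * V 0 := by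
                refine mul_le_mul_of_nonneg_right ?_ (hV 0)
                exact pow_le_pow_of_le_one hr0 hr1 (by have := hd n; omega)
        have hVn : V n ≤ r ^ n * V 0 := ih n (by omega)
        have hA : r ^ n * V 0 ≤ r ^ (n - dmax) * V 0 :=
          mul_le_mul_of_nonneg_right (pow_le_pow_of_le_one hr0 hr1 (by omega)) (hV 0)
        calc V (n + 1) ≤ p * V n + q * (Finset.Icc (n - d n) n).sup'
              (Finset.nonempty_Icc.mpr (Nat.sub_le _ _)) V := hrec n
          _ ≤ p * (r ^ n * V 0) + q * (r ^ (n - dmax) * V 0) :=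
              add_le_add (mul_le_mul_of_nonneg_left hVn hp)
                (mul_le_mul_of_nonneg_left hsup hq)
          _ ≤ p * (r ^ (n - dmax) * V 0) + q * (r ^ (n - dmax) * V 0) := by
              refine add_le_add_left (mul_le_mul_of_nonneg_left hA hp) _
          _ = (p + q) * (r ^ (n - dmax) * V 0) := by ring
          _ = r ^ ((1 + dmax) + (n - dmax)) * V 0 := by rw [pow_add, ← hrpow]; ring
          _ ≤ r ^ (n + 1) * V 0 :=
              mul_le_mul_of_nonneg_right (pow_le_pow_of_le_one hr0 hr1 (by omega)) (hV 0)
  exact fun k _ => key k
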